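/- Let n ≥ 3 and let V_1,...,V_n, W_1,...,W_n be jointly distributed {-1,+1}-valued random variables. Then s_odd(E[V_1 W_2], E[V_2 W_3], ..., E[V_n W_1], E[V_1 W_1], E[V_2 W_2], ..., E[V_n W_n]) ≤ 2n - 2, where s_odd of a list of 2n reals is the maximum of signed sums with an odd number of minus signs. -/

import Mathlib

open Finset

/-- Number of minus signs in a sign vector (encoded as a Boolean vector,
`true` meaning the sign `-1`). -/
def negCount {ι : Type*} [Fintype ι] [DecidableEq ι] (ε : ι → Bool) : ℕ :=
  (Finset.univ.filter (fun i => ε i = true)).card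

/-- The signed sum `Σ ε_i a_i` corresponding to a sign vector. -/
def sgnSum {ι : Type*} [Fintype ι] (a : ι → ℝ) (ε : ι → Bool) : ℝ :=
  ∑ i, (if ε i then -(a i) else a i)

/-- Sign vectors with an even number of `-1`'s. -/
def evenSigns (ι : Type*) [Fintype ι] [DecidableEq ι] : Finset (ι → Bool) :=
  Finset.univ.filter (fun ε => Even (negCount ε))

/-- Sign vectors with an odd number of `-1`'s. -/
def oddSigns (ι : Type*) [Fintype ι] [DecidableEq ι] : Finset (ι → Bool) :=
  Finset.univ.filter (fun ε => Odd (negCount ε))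

lemma evenSigns_nonempty (ι : Type*) [Fintype ι] [DecidableEq ι] :
    (evenSigns ι).Nonempty :=
  ⟨fun _ => false, by rw [evenSigns, Finset.mem_filter]; exact ⟨Finset.mem_univ _, by simp [negCount]⟩⟩

lemma oddSigns_nonempty (ι : Type*) [Fintype ι] [DecidableEq ι] [Nonempty ι] :
    (oddSigns ι).Nonempty := by
  refine ⟨fun i => decide (i = Classical.arbitrary ι), ?_⟩
  rw [oddSigns, Finset.mem_filter]
  exact ⟨Finset.mem_univ _, by simp [negCount, Finset.filter_eq']⟩

/-- `s_even`: maximum of signed sums over sign vectors with evenly many minuses. -/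
noncomputable def sEven {ι : Type*} [Fintype ι] [DecidableEq ι] (a : ι → ℝ) : ℝ :=
  (evenSigns ι).sup' (evenSigns_nonempty ι) (sgnSum a)

/-- `s_odd`: maximum of signed sums over sign vectors with oddly many minuses. -/
noncomputable def sOdd {ι : Type*} [Fintype ι] [DecidableEq ι] [Nonempty ι] (a : ι → ℝ) : ℝ :=
  (oddSigns ι).sup' (oddSigns_nonempty ι) (sgnSum a)

open MeasureTheory

/-- If finitely many `±1` numbers have product `-1`, their sum is at most `card - 2`. -/
lemma sum_le_card_sub_two {ι : Type*} [Fintype ι] [DecidableEq ι] (f : ι → ℝ)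
    (hpm : ∀ i, f i = 1 ∨ f i = -1) (hprod : ∏ i, f i = -1) :
    ∑ i, f i ≤ (Fintype.card ι : ℝ) - 2 := by
  have hj : ∃ j, f j = -1 := by
    by_contra h
    push_neg at h
    have : ∏ i, f i = 1 :=
      Finset.prod_eq_one (fun i _ => (hpm i).resolve_right (h i))
    rw [this] at hprod; norm_num at hprod
  obtain ⟨j, hj⟩ := hj
  have hcard : 1 ≤ Fintype.card ι := Fintype.card_pos_iff.mpr ⟨j⟩
  rw [← Finset.sum_erase_add _ _ (Finset.mem_univ j), hj]
  have h1 : ∑ i ∈ Finset.univ.erase j, f i ≤ ((Fintype.card ι : ℝ) - 1) := by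
    calc ∑ i ∈ Finset.univ.erase j, f i ≤ ∑ _i ∈ Finset.univ.erase j, (1 : ℝ) :=
          Finset.sum_le_sum (fun i _ => by rcases hpm i with h | h <;> rw [h] <;> norm_num)
      _ = ((Fintype.card ι : ℝ) - 1) := by
          simp [Finset.card_erase_of_mem, Nat.cast_sub hcard]
  linarith

/-- Necessity of the compatibility condition for cyclic systems: for jointly
distributed `±1`-valued `V_1,…,V_n, W_1,…,W_n`, `s_odd` of the `n` observed
correlations `E[V_i W_{i⊕1}]` together with the `n` connection correlations
`E[V_i W_i]` is at most `2n - 2`. -/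
theorem cyclic_compatibility_necessity
    (n : ℕ) [NeZero n] (hn : 3 ≤ n)
    {Ω : Type*} [MeasurableSpace Ω] (μ : Measure Ω) [IsProbabilityMeasure μ]
    (V W : Fin n → Ω → ℝ)
    (hV : ∀ i ω, V i ω = 1 ∨ V i ω = -1)
    (hW : ∀ i ω, W i ω = 1 ∨ W i ω = -1)
    (mV : ∀ i, Measurable (V i)) (mW : ∀ i, Measurable (W i)) :
    sOdd (Sum.elim (fun i : Fin n => ∫ ω, V i ω * W (i + 1) ω ∂μ)
                   (fun i : Fin n => ∫ ω, V i ω * W i ω ∂μ)) ≤ 2 * (n : ℝ) - 2 := by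
  apply Finset.sup'_le
  intro ε hε
  rw [oddSigns, Finset.mem_filter] at hε
  obtain ⟨-, hodd⟩ := hε
  set X : (Fin n ⊕ Fin n) → Ω → ℝ :=
    Sum.elim (fun i ω => V i ω * W (i + 1) ω) (fun i ω => V i ω * W i ω) with hXdef
  have hXpm : ∀ i ω, X i ω = 1 ∨ X i ω = -1 := by
    rintro (i | i) ω
    · rcases hV i ω with h1 | h1 <;> rcases hW (i + 1) ω with h2 | h2 <;>
        simp [hXdef, h1, h2]
    · rcases hV i ω with h1 | h1 <;> rcases hW i ω with h2 | h2 <;>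
        simp [hXdef, h1, h2]
  have hXm : ∀ i, Measurable (X i) := by
    rintro (i | i)
    · exact (mV i).mul (mW (i + 1))
    · exact (mV i).mul (mW i)
  have hXint : ∀ i, Integrable (X i) μ := by
    intro i
    refine (integrable_const (1 : ℝ)).mono' (hXm i).aestronglyMeasurable ?_
    filter_upwards with ω
    rcases hXpm i ω with h | h <;> simp [h]
  set g : (Fin n ⊕ Fin n) → Ω → ℝ := fun i ω => if ε i then -(X i ω) else X i ω with hgdef
  have hgint : ∀ i, Integrable (g i) μ := by
    intro i
    cases hb : ε i
    · simpa [hgdef, hb] using hXint i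
    · simp only [hgdef, hb, if_true]
      exact (hXint i).neg
  have hgpm : ∀ i ω, g i ω = 1 ∨ g i ω = -1 := by
    intro i ω
    simp only [hgdef]
    rcases hXpm i ω with h | h <;> by_cases he : ε i = true <;> simp [h, he]
  -- pointwise product of the signed terms is -1
  have hprod : ∀ ω, ∏ i, g i ω = -1 := by
    intro ω
    have h1 : ∀ i, g i ω = (if ε i then (-1 : ℝ) else 1) * X i ω := by
      intro i
      by_cases he : ε i = true <;> simp [hgdef, he]
    have h2 : ∏ i, g i ω = (∏ i, (if ε i then (-1 : ℝ) else 1)) * ∏ i, X i ω := by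
      rw [← Finset.prod_mul_distrib]
      exact Finset.prod_congr rfl (fun i _ => h1 i)
    have h3 : (∏ i, (if ε i then (-1 : ℝ) else 1)) = (-1 : ℝ) ^ negCount ε := by
      rw [Finset.prod_ite, Finset.prod_const, Finset.prod_const]
      simp [negCount]
    have h4 : ∏ i, X i ω = 1 := by
      have hWshift : ∏ i : Fin n, W (i + 1) ω = ∏ i : Fin n, W i ω :=
        Fintype.prod_equiv (Equiv.addRight (1 : Fin n)) _ _ (fun i => rfl)
      have : ∏ i, X i ω
          = (∏ i : Fin n, V i ω * W (i + 1) ω) * ∏ i : Fin n, V i ω * W i ω := by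
        simp [hXdef, Fintype.prod_sum_type]
      rw [this, Finset.prod_mul_distrib, Finset.prod_mul_distrib, hWshift]
      have hv : (∏ i : Fin n, V i ω) * (∏ i : Fin n, V i ω) = 1 := by
        rw [← Finset.prod_mul_distrib]
        exact Finset.prod_eq_one (fun i _ => by rcases hV i ω with h | h <;> rw [h] <;> norm_num)
      have hw : (∏ i : Fin n, W i ω) * (∏ i : Fin n, W i ω) = 1 := by
        rw [← Finset.prod_mul_distrib]
        exact Finset.prod_eq_one (fun i _ => by rcases hW i ω with h | h <;> rw [h] <;> norm_num)
      calc (∏ i : Fin n, V i ω) * (∏ i : Fin n, W i ω) *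
              ((∏ i : Fin n, V i ω) * (∏ i : Fin n, W i ω))
          = ((∏ i : Fin n, V i ω) * (∏ i : Fin n, V i ω)) *
              ((∏ i : Fin n, W i ω) * (∏ i : Fin n, W i ω)) := by ring
        _ = 1 := by rw [hv, hw, one_mul]
    rw [h2, h3, h4, mul_one, hodd.neg_one_pow]
  -- pointwise bound on the sum
  have hsum : ∀ ω, ∑ i, g i ω ≤ 2 * (n : ℝ) - 2 := by
    intro ω
    have := sum_le_card_sub_two (fun i => g i ω) (fun i => hgpm i ω) (hprod ω)
    have hcard : (Fintype.card (Fin n ⊕ Fin n) : ℝ) = 2 * (n : ℝ) := by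
      simp [Fintype.card_sum]; ring
    rw [hcard] at this
    exact this
  -- rewrite sgnSum as an integral
  have hterm : ∀ i, (if ε i then
      -(Sum.elim (fun i : Fin n => ∫ ω, V i ω * W (i + 1) ω ∂μ)
                 (fun i : Fin n => ∫ ω, V i ω * W i ω ∂μ) i)
      else Sum.elim (fun i : Fin n => ∫ ω, V i ω * W (i + 1) ω ∂μ)
                 (fun i : Fin n => ∫ ω, V i ω * W i ω ∂μ) i) = ∫ ω, g i ω ∂μ := by
    intro i
    have hXint' : (Sum.elim (fun i : Fin n => ∫ ω, V i ω * W (i + 1) ω ∂μ)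
                 (fun i : Fin n => ∫ ω, V i ω * W i ω ∂μ)) i = ∫ ω, X i ω ∂μ := by
      rcases i with i | i <;> rfl
    by_cases he : ε i = true <;> simp [hgdef, he, hXint', integral_neg]
  calc sgnSum _ ε = ∑ i, ∫ ω, g i ω ∂μ := Finset.sum_congr rfl (fun i _ => hterm i)
    _ = ∫ ω, ∑ i, g i ω ∂μ := (integral_finset_sum _ (fun i _ => hgint i)).symm
    _ ≤ ∫ _ω, (2 * (n : ℝ) - 2) ∂μ :=
        integral_mono (integrable_finset_sum _ (fun i _ => hgint i)) (integrable_const _) hsum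
    _ = 2 * (n : ℝ) - 2 := by simp
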